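/- Take c = 2 in the context and assume φ has the elementarily normalized class-II form: φ₁(z, conj z, u₁, u₂) = z·conj z·(1 + ρ₁) and φ₂(z, conj z, u₁, u₂) = z²·conj z + z·(conj z)² + z·conj z·ρ₂, where ρ₁, ρ₂ are real-valued real-analytic functions of (z, conj z, u₁, u₂) with ρ_j(0) = 0 and ∂ρ_j/∂z(0) = ∂ρ_j/∂z̄(0) = 0 for j = 1, 2. Then A(0) = 0 (so that L|₀ = ∂/∂z|₀ and L̄|₀ = ∂/∂z̄|₀), (B₁(0), B₂(0)) = (−2i, 0), and (M₁(0), M₂(0)) = (0, −4i); that is, [L, L̄]|₀ = −2i·∂/∂u₁|₀ and [L, [L, L̄]]|₀ = −4i·∂/∂u₂|₀. -/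

import Mathlib

open Complex Filter Topology ComplexConjugate

noncomputable section

variable {c : ℕ}

/-- Wirtinger derivative `∂/∂z` of a function of `(z, u) ∈ ℂ × ℝ^c`. -/
def dZ (f : ℂ × (Fin c → ℝ) → ℂ) (p : ℂ × (Fin c → ℝ)) : ℂ :=
  (fderiv ℝ f p (1, 0) - Complex.I * fderiv ℝ f p (Complex.I, 0)) / 2

/-- Wirtinger derivative `∂/∂z̄` of a function of `(z, u) ∈ ℂ × ℝ^c`. -/
def dZbar (f : ℂ × (Fin c → ℝ) → ℂ) (p : ℂ × (Fin c → ℝ)) : ℂ :=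
  (fderiv ℝ f p (1, 0) + Complex.I * fderiv ℝ f p (Complex.I, 0)) / 2

/-- Derivative `∂/∂u_j` of a function of `(z, u) ∈ ℂ × ℝ^c`. -/
def dU (j : Fin c) (f : ℂ × (Fin c → ℝ) → ℂ) (p : ℂ × (Fin c → ℝ)) : ℂ :=
  fderiv ℝ f p (0, Pi.single j 1)

/-- The coefficient vector `A := −(i·I_c + φ_u)⁻¹·φ_z` of the CR vector field `L`,
for a real defining map `φ(z, conj z, u)` of a CR-generic graph in `ℂ^{1+c}`. -/
def coefA (φ : ℂ × (Fin c → ℝ) → (Fin c → ℝ)) (p : ℂ × (Fin c → ℝ)) : Fin c → ℂ :=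
  -(Matrix.mulVec
      (Complex.I • (1 : Matrix (Fin c) (Fin c) ℂ) +
        Matrix.of fun j k => dU k (fun q => ((φ q j : ℝ) : ℂ)) p)⁻¹
      (fun j => dZ (fun q => ((φ q j : ℝ) : ℂ)) p))

/-- The CR vector field `L = ∂/∂z + Σ_j A_j·∂/∂u_j`. -/
def opL (φ : ℂ × (Fin c → ℝ) → (Fin c → ℝ)) (f : ℂ × (Fin c → ℝ) → ℂ)
    (p : ℂ × (Fin c → ℝ)) : ℂ :=
  dZ f p + ∑ j, coefA φ p j * dU j f p

/-- The conjugate CR vector field `L̄ = ∂/∂z̄ + Σ_j conj(A_j)·∂/∂u_j`. -/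
def opLbar (φ : ℂ × (Fin c → ℝ) → (Fin c → ℝ)) (f : ℂ × (Fin c → ℝ) → ℂ)
    (p : ℂ × (Fin c → ℝ)) : ℂ :=
  dZbar f p + ∑ j, conj (coefA φ p j) * dU j f p

/-- `B_j := L(conj A_j) − L̄(A_j)`, the `∂/∂u_j`-coefficient of `[L, L̄]`. -/
def coefB (φ : ℂ × (Fin c → ℝ) → (Fin c → ℝ)) (j : Fin c) (p : ℂ × (Fin c → ℝ)) : ℂ :=
  opL φ (fun q => conj (coefA φ q j)) p - opLbar φ (fun q => coefA φ q j) p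

/-- `M_j := L(B_j) − Σ_k B_k·∂A_j/∂u_k`, the `∂/∂u_j`-coefficient of `[L, [L, L̄]]`. -/
def coefM (φ : ℂ × (Fin c → ℝ) → (Fin c → ℝ)) (j : Fin c) (p : ℂ × (Fin c → ℝ)) : ℂ :=
  opL φ (coefB φ j) p - ∑ k, coefB φ k p * dU k (fun q => coefA φ q j) p

/-- `N_j := L̄(B_j) − Σ_k B_k·∂(conj A_j)/∂u_k`, the `∂/∂u_j`-coefficient of
`[L̄, [L, L̄]]`. -/
def coefN (φ : ℂ × (Fin c → ℝ) → (Fin c → ℝ)) (j : Fin c) (p : ℂ × (Fin c → ℝ)) : ℂ :=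
  opLbar φ (coefB φ j) p - ∑ k, coefB φ k p * dU k (fun q => conj (coefA φ q j)) p

/-- `P_j := L(M_j) − Σ_k M_k·∂A_j/∂u_k`, the `∂/∂u_j`-coefficient of
`[L, [L, [L, L̄]]]`. -/
def coefP (φ : ℂ × (Fin c → ℝ) → (Fin c → ℝ)) (j : Fin c) (p : ℂ × (Fin c → ℝ)) : ℂ :=
  opL φ (coefM φ j) p - ∑ k, coefM φ k p * dU k (fun q => coefA φ q j) p

namespace CRaux
variable {f g : ℂ × (Fin c → ℝ) → ℂ} {p v : ℂ × (Fin c → ℝ)}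
-- (tested lemmas from t2 assumed; inserted here)
lemma fd_mul (hf : DifferentiableAt ℝ f p) (hg : DifferentiableAt ℝ g p) (v) :
    fderiv ℝ (fun q => f q * g q) p v = fderiv ℝ f p v * g p + f p * fderiv ℝ g p v := by
  rw [fderiv_fun_mul hf hg]; simp [smul_eq_mul]; ring

lemma fd_conj (hf : DifferentiableAt ℝ f p) (v) :
    fderiv ℝ (fun q => conj (f q)) p v = conj (fderiv ℝ f p v) := by
  have : HasFDerivAt (fun q => conj (f q))
      ((Complex.conjCLE.toContinuousLinearMap).comp (fderiv ℝ f p)) p :=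
    (Complex.conjCLE.toContinuousLinearMap.hasFDerivAt).comp p hf.hasFDerivAt
  rw [this.fderiv]; rfl

lemma fd_inv (hf : DifferentiableAt ℝ f p) (h0 : f p ≠ 0) (v) :
    fderiv ℝ (fun q => (f q)⁻¹) p v = -((f p) ^ 2)⁻¹ * fderiv ℝ f p v := by
  have : HasFDerivAt (fun q => (f q)⁻¹) ((-((f p) ^ 2)⁻¹) • fderiv ℝ f p) p :=
    (hasDerivAt_inv h0).comp_hasFDerivAt p hf.hasFDerivAt
  rw [this.fderiv]; simp [smul_eq_mul]

lemma fd_fst (v) : fderiv ℝ (fun q : ℂ × (Fin c → ℝ) => q.1) p v = v.1 := by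
  rw [show (fun q : ℂ × (Fin c → ℝ) => q.1) = Prod.fst from rfl, fderiv_fst]; rfl

lemma fd_cfst (v) : fderiv ℝ (fun q : ℂ × (Fin c → ℝ) => conj q.1) p v = conj v.1 := by
  rw [fd_conj differentiableAt_fst, fd_fst]

-- dZ / dZbar / dU rules
lemma dZ_mul (hf : DifferentiableAt ℝ f p) (hg : DifferentiableAt ℝ g p) :
    dZ (fun q => f q * g q) p = dZ f p * g p + f p * dZ g p := by
  simp only [dZ, fd_mul hf hg]; ring

lemma dZbar_mul (hf : DifferentiableAt ℝ f p) (hg : DifferentiableAt ℝ g p) :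
    dZbar (fun q => f q * g q) p = dZbar f p * g p + f p * dZbar g p := by
  simp only [dZbar, fd_mul hf hg]; ring

lemma dU_mul (j : Fin c) (hf : DifferentiableAt ℝ f p) (hg : DifferentiableAt ℝ g p) :
    dU j (fun q => f q * g q) p = dU j f p * g p + f p * dU j g p := by
  simp only [dU, fd_mul hf hg]

lemma dZ_add (hf : DifferentiableAt ℝ f p) (hg : DifferentiableAt ℝ g p) :
    dZ (fun q => f q + g q) p = dZ f p + dZ g p := by
  simp only [dZ, fderiv_fun_add hf hg, ContinuousLinearMap.add_apply]; ring

lemma dZbar_add (hf : DifferentiableAt ℝ f p) (hg : DifferentiableAt ℝ g p) :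
    dZbar (fun q => f q + g q) p = dZbar f p + dZbar g p := by
  simp only [dZbar, fderiv_fun_add hf hg, ContinuousLinearMap.add_apply]; ring

lemma dU_add (j : Fin c) (hf : DifferentiableAt ℝ f p) (hg : DifferentiableAt ℝ g p) :
    dU j (fun q => f q + g q) p = dU j f p + dU j g p := by
  simp only [dU, fderiv_fun_add hf hg, ContinuousLinearMap.add_apply]

lemma dZ_sub (hf : DifferentiableAt ℝ f p) (hg : DifferentiableAt ℝ g p) :
    dZ (fun q => f q - g q) p = dZ f p - dZ g p := by
  simp only [dZ, fderiv_fun_sub hf hg, ContinuousLinearMap.sub_apply]; ring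

lemma dZ_neg : dZ (fun q => -(f q)) p = -dZ f p := by
  simp only [dZ, fderiv_fun_neg, ContinuousLinearMap.neg_apply]; ring

lemma dZbar_neg : dZbar (fun q => -(f q)) p = -dZbar f p := by
  simp only [dZbar, fderiv_fun_neg, ContinuousLinearMap.neg_apply]; ring

lemma dZ_const (a : ℂ) : dZ (fun _ : ℂ × (Fin c → ℝ) => a) p = 0 := by
  simp [dZ]

lemma dZbar_const (a : ℂ) : dZbar (fun _ : ℂ × (Fin c → ℝ) => a) p = 0 := by
  simp [dZbar]

lemma dU_const (j : Fin c) (a : ℂ) : dU j (fun _ : ℂ × (Fin c → ℝ) => a) p = 0 := by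
  simp [dU]

lemma dZ_z : dZ (fun q : ℂ × (Fin c → ℝ) => q.1) p = 1 := by
  simp [dZ, fd_fst, Complex.I_mul_I]

lemma dZbar_z : dZbar (fun q : ℂ × (Fin c → ℝ) => q.1) p = 0 := by
  simp [dZbar, fd_fst, Complex.I_mul_I]

lemma dU_z (j : Fin c) : dU j (fun q : ℂ × (Fin c → ℝ) => q.1) p = 0 := by
  simp [dU, fd_fst]

lemma dZ_zbar : dZ (fun q : ℂ × (Fin c → ℝ) => conj q.1) p = 0 := by
  simp [dZ, fd_cfst, Complex.conj_I, Complex.I_mul_I]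

lemma dZbar_zbar : dZbar (fun q : ℂ × (Fin c → ℝ) => conj q.1) p = 1 := by
  simp [dZbar, fd_cfst, Complex.conj_I, Complex.I_mul_I]

lemma dU_zbar (j : Fin c) : dU j (fun q : ℂ × (Fin c → ℝ) => conj q.1) p = 0 := by
  simp [dU, fd_cfst]

lemma dZ_conj (hf : DifferentiableAt ℝ f p) :
    dZ (fun q => conj (f q)) p = conj (dZbar f p) := by
  simp only [dZ, dZbar, fd_conj hf]
  rw [map_div₀, map_add, map_mul, Complex.conj_I]
  have h2 : (starRingEnd ℂ) 2 = 2 := map_ofNat _ 2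
  rw [h2]; ring

lemma dZbar_conj (hf : DifferentiableAt ℝ f p) :
    dZbar (fun q => conj (f q)) p = conj (dZ f p) := by
  simp only [dZ, dZbar, fd_conj hf]
  rw [map_div₀, map_sub, map_mul, Complex.conj_I]
  have h2 : (starRingEnd ℂ) 2 = 2 := map_ofNat _ 2
  rw [h2]; ring

lemma dU_conj (j : Fin c) (hf : DifferentiableAt ℝ f p) :
    dU j (fun q => conj (f q)) p = conj (dU j f p) := by
  simp only [dU, fd_conj hf]

lemma dZ_inv (hf : DifferentiableAt ℝ f p) (h0 : f p ≠ 0) :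
    dZ (fun q => (f q)⁻¹) p = -((f p) ^ 2)⁻¹ * dZ f p := by
  simp only [dZ, fd_inv hf h0]; ring

lemma dZbar_inv (hf : DifferentiableAt ℝ f p) (h0 : f p ≠ 0) :
    dZbar (fun q => (f q)⁻¹) p = -((f p) ^ 2)⁻¹ * dZbar f p := by
  simp only [dZbar, fd_inv hf h0]; ring

-- congruence
lemma dZ_congr (h : f =ᶠ[𝓝 p] g) : dZ f p = dZ g p := by
  rw [dZ, dZ, h.symm.fderiv_eq]

lemma dZbar_congr (h : f =ᶠ[𝓝 p] g) : dZbar f p = dZbar g p := by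
  rw [dZbar, dZbar, h.symm.fderiv_eq]

lemma dU_congr (j : Fin c) (h : f =ᶠ[𝓝 p] g) : dU j f p = dU j g p := by
  rw [dU, dU, h.symm.fderiv_eq]

lemma dZ_congr_ev (h : f =ᶠ[𝓝 p] g) : dZ f =ᶠ[𝓝 p] dZ g :=
  (h.fderiv (𝕜 := ℝ)).mono fun q hq => by rw [dZ, dZ, hq]

lemma dZbar_congr_ev (h : f =ᶠ[𝓝 p] g) : dZbar f =ᶠ[𝓝 p] dZbar g :=
  (h.fderiv (𝕜 := ℝ)).mono fun q hq => by rw [dZbar, dZbar, hq]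

lemma dU_congr_ev (j : Fin c) (h : f =ᶠ[𝓝 p] g) : dU j f =ᶠ[𝓝 p] dU j g :=
  (h.fderiv (𝕜 := ℝ)).mono fun q hq => by rw [dU, dU, hq]

-- analyticity preservation
lemma _root_.AnalyticAt.dZ' (hf : AnalyticAt ℝ f p) : AnalyticAt ℝ (dZ f) p := by
  have h1 : AnalyticAt ℝ (fun q => fderiv ℝ f q (1, 0)) p :=
    ((ContinuousLinearMap.apply ℝ ℂ ((1 : ℂ), (0 : Fin c → ℝ))).analyticAt _).comp hf.fderiv
  have h2 : AnalyticAt ℝ (fun q => fderiv ℝ f q (Complex.I, 0)) p :=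
    ((ContinuousLinearMap.apply ℝ ℂ ((Complex.I : ℂ), (0 : Fin c → ℝ))).analyticAt _).comp hf.fderiv
  exact ((h1.sub (analyticAt_const.mul h2)).div analyticAt_const (by norm_num))

lemma _root_.AnalyticAt.dZbar' (hf : AnalyticAt ℝ f p) : AnalyticAt ℝ (dZbar f) p := by
  have h1 : AnalyticAt ℝ (fun q => fderiv ℝ f q (1, 0)) p :=
    ((ContinuousLinearMap.apply ℝ ℂ ((1 : ℂ), (0 : Fin c → ℝ))).analyticAt _).comp hf.fderiv
  have h2 : AnalyticAt ℝ (fun q => fderiv ℝ f q (Complex.I, 0)) p :=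
    ((ContinuousLinearMap.apply ℝ ℂ ((Complex.I : ℂ), (0 : Fin c → ℝ))).analyticAt _).comp hf.fderiv
  exact ((h1.add (analyticAt_const.mul h2)).div analyticAt_const (by norm_num))

lemma _root_.AnalyticAt.dU' (j : Fin c) (hf : AnalyticAt ℝ f p) : AnalyticAt ℝ (dU j f) p :=
  ((ContinuousLinearMap.apply ℝ ℂ ((0 : ℂ), (Pi.single j 1 : Fin c → ℝ))).analyticAt _).comp hf.fderiv

lemma _root_.AnalyticAt.conj' (hf : AnalyticAt ℝ f p) : AnalyticAt ℝ (fun q => conj (f q)) p :=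
  ((Complex.conjCLE.toContinuousLinearMap.analyticAt _).comp hf :)

end CRaux

namespace CRaux
variable {f g : ℂ × (Fin c → ℝ) → ℂ} {p : ℂ × (Fin c → ℝ)}

lemma diff_z : DifferentiableAt ℝ (fun q : ℂ × (Fin c → ℝ) => q.1) p := differentiableAt_fst

lemma diff_zbar : DifferentiableAt ℝ (fun q : ℂ × (Fin c → ℝ) => conj q.1) p :=
  Complex.conjCLE.differentiableAt.comp p differentiableAt_fst

lemma analyticAt_z : AnalyticAt ℝ (fun q : ℂ × (Fin c → ℝ) => q.1) p :=
  (ContinuousLinearMap.fst ℝ ℂ (Fin c → ℝ)).analyticAt p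

lemma analyticAt_zbar : AnalyticAt ℝ (fun q : ℂ × (Fin c → ℝ) => conj q.1) p :=
  (Complex.conjCLE.toContinuousLinearMap.analyticAt _).comp analyticAt_z

end CRaux

open CRaux


namespace CRaux
variable {f g : ℂ × (Fin c → ℝ) → ℂ} {p : ℂ × (Fin c → ℝ)}

lemma dZ_zzbar (h : AnalyticAt ℝ g 0) :
    dZ (fun q : ℂ × (Fin c → ℝ) => q.1 * conj q.1 * g q) 0 = 0 := by
  rw [dZ_mul (f := fun q : ℂ × (Fin c → ℝ) => q.1 * conj q.1) (g := g)
      (diff_z.mul diff_zbar) h.differentiableAt,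
    dZ_mul (f := fun q : ℂ × (Fin c → ℝ) => q.1) (g := fun q => conj q.1) diff_z diff_zbar,
    dZ_z, dZ_zbar]
  simp

lemma dZbar_zzbar (h : AnalyticAt ℝ g 0) :
    dZbar (fun q : ℂ × (Fin c → ℝ) => q.1 * conj q.1 * g q) 0 = 0 := by
  rw [dZbar_mul (f := fun q : ℂ × (Fin c → ℝ) => q.1 * conj q.1) (g := g)
      (diff_z.mul diff_zbar) h.differentiableAt,
    dZbar_mul (f := fun q : ℂ × (Fin c → ℝ) => q.1) (g := fun q => conj q.1) diff_z diff_zbar,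
    dZbar_z, dZbar_zbar]
  simp

end CRaux

open CRaux
def Ff (φ : ℂ × (Fin 2 → ℝ) → (Fin 2 → ℝ)) (j : Fin 2) : ℂ × (Fin 2 → ℝ) → ℂ :=
  fun q => ((φ q j : ℝ) : ℂ)

def DD (φ : ℂ × (Fin 2 → ℝ) → (Fin 2 → ℝ)) : ℂ × (Fin 2 → ℝ) → ℂ := fun q =>
  (Complex.I + dU 0 (Ff φ 0) q) * (Complex.I + dU 1 (Ff φ 1) q) -
    dU 1 (Ff φ 0) q * dU 0 (Ff φ 1) q

lemma coefA_formula (φ : ℂ × (Fin 2 → ℝ) → (Fin 2 → ℝ)) (q : ℂ × (Fin 2 → ℝ)) :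
    coefA φ q 0 = -((DD φ q)⁻¹ *
        ((Complex.I + dU 1 (Ff φ 1) q) * dZ (Ff φ 0) q -
          dU 1 (Ff φ 0) q * dZ (Ff φ 1) q)) ∧
    coefA φ q 1 = -((DD φ q)⁻¹ *
        (-(dU 0 (Ff φ 1) q) * dZ (Ff φ 0) q +
          (Complex.I + dU 0 (Ff φ 0) q) * dZ (Ff φ 1) q)) := by
  have hM : (Complex.I • (1 : Matrix (Fin 2) (Fin 2) ℂ) +
      Matrix.of fun j k => dU k (fun q' => ((φ q' j : ℝ) : ℂ)) q) =
      !![Complex.I + dU 0 (Ff φ 0) q, dU 1 (Ff φ 0) q;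
         dU 0 (Ff φ 1) q, Complex.I + dU 1 (Ff φ 1) q] := by
    ext i k
    fin_cases i <;> fin_cases k <;>
      · simp [Matrix.one_apply, Matrix.smul_apply, smul_eq_mul]
        try rfl
  unfold coefA
  rw [hM, Matrix.inv_def, Matrix.det_fin_two_of, Matrix.adjugate_fin_two_of,
    Ring.inverse_eq_inv, Matrix.smul_mulVec]
  constructor <;>
  · simp only [Matrix.mulVec, dotProduct, Fin.sum_univ_two, Matrix.cons_val',
      Matrix.cons_val_zero, Matrix.cons_val_one, Matrix.head_cons, Matrix.empty_val',
      Matrix.cons_val_fin_one, Pi.neg_apply, Pi.smul_apply, smul_eq_mul, DD, Ff,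
      Matrix.of_apply, Matrix.vecHead, Matrix.vecTail]
    unfold Ff
    ring

def rCf (ρ : ℂ × (Fin 2 → ℝ) → ℝ) : ℂ × (Fin 2 → ℝ) → ℂ := fun q => ((ρ q : ℝ) : ℂ)

def sAf (ρ₁ : ℂ × (Fin 2 → ℝ) → ℝ) : ℂ × (Fin 2 → ℝ) → ℂ := fun q =>
  1 + rCf ρ₁ q + q.1 * dZ (rCf ρ₁) q

def sBf (ρ₂ : ℂ × (Fin 2 → ℝ) → ℝ) : ℂ × (Fin 2 → ℝ) → ℂ := fun q =>
  2 * q.1 + conj q.1 + rCf ρ₂ q + q.1 * dZ (rCf ρ₂) q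

def tAf (φ : ℂ × (Fin 2 → ℝ) → (Fin 2 → ℝ)) (ρ₁ ρ₂ : ℂ × (Fin 2 → ℝ) → ℝ) :
    ℂ × (Fin 2 → ℝ) → ℂ := fun q =>
  (Complex.I + dU 1 (Ff φ 1) q) * sAf ρ₁ q - dU 1 (Ff φ 0) q * sBf ρ₂ q

def tBf (φ : ℂ × (Fin 2 → ℝ) → (Fin 2 → ℝ)) (ρ₁ ρ₂ : ℂ × (Fin 2 → ℝ) → ℝ) :
    ℂ × (Fin 2 → ℝ) → ℂ := fun q =>
  -(dU 0 (Ff φ 1) q) * sAf ρ₁ q + (Complex.I + dU 0 (Ff φ 0) q) * sBf ρ₂ q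

def GAf (φ : ℂ × (Fin 2 → ℝ) → (Fin 2 → ℝ)) (ρ₁ ρ₂ : ℂ × (Fin 2 → ℝ) → ℝ) :
    ℂ × (Fin 2 → ℝ) → ℂ := fun q => -(DD φ q)⁻¹ * tAf φ ρ₁ ρ₂ q

def GBf (φ : ℂ × (Fin 2 → ℝ) → (Fin 2 → ℝ)) (ρ₁ ρ₂ : ℂ × (Fin 2 → ℝ) → ℝ) :
    ℂ × (Fin 2 → ℝ) → ℂ := fun q => -(DD φ q)⁻¹ * tBf φ ρ₁ ρ₂ q

lemma master (φ : ℂ × (Fin 2 → ℝ) → (Fin 2 → ℝ)) (G : Fin 2 → ℂ × (Fin 2 → ℝ) → ℂ)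
    (hG : ∀ j, AnalyticAt ℝ (G j) 0)
    (hAf : ∀ j, (fun q => coefA φ q j) =ᶠ[𝓝 (0 : ℂ × (Fin 2 → ℝ))] fun q => conj q.1 * G j q) :
    coefA φ 0 = 0 ∧
    (∀ j, coefB φ j 0 = conj (G j 0) - G j 0) ∧
    (∀ j, coefM φ j 0 = 2 * conj (dZbar (G j) 0) - dZ (G j) 0) := by
  have hGb : ∀ j, AnalyticAt ℝ (fun q => conj (G j q)) 0 := fun j => (hG j).conj'
  -- values of coefA at 0
  have hA00 : ∀ j, coefA φ 0 j = 0 := by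
    intro j
    have := (hAf j).self_of_nhds
    simpa using this
  have hAvec : coefA φ 0 = 0 := funext fun j => by rw [hA00 j]; rfl
  -- conj version of hAf
  have hAbf : ∀ j, (fun q => conj (coefA φ q j)) =ᶠ[𝓝 (0 : ℂ × (Fin 2 → ℝ))]
      fun q => q.1 * conj (G j q) := by
    intro j
    filter_upwards [hAf j] with q hq
    rw [hq, map_mul, Complex.conj_conj]
  -- analyticity of A j and conj A j
  have hAanal : ∀ j, AnalyticAt ℝ (fun q => coefA φ q j) 0 := fun j =>
    (analyticAt_zbar.mul (hG j)).congr (hAf j).symm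
  have hAbanal : ∀ j, AnalyticAt ℝ (fun q => conj (coefA φ q j)) 0 := fun j =>
    (analyticAt_z.mul (hGb j)).congr (hAbf j).symm
  -- eventual formulas for first derivatives
  have hdZbarA : ∀ j, dZbar (fun q => coefA φ q j) =ᶠ[𝓝 (0 : ℂ × (Fin 2 → ℝ))]
      fun q => G j q + conj q.1 * dZbar (G j) q := by
    intro j
    have h1 := eventually_eventually_nhds.mpr (hAf j)
    filter_upwards [h1, (hG j).eventually_analyticAt] with q hq hGq
    rw [dZbar_congr hq, dZbar_mul diff_zbar hGq.differentiableAt, dZbar_zbar, one_mul]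
  have hdZAb : ∀ j, dZ (fun q => conj (coefA φ q j)) =ᶠ[𝓝 (0 : ℂ × (Fin 2 → ℝ))]
      fun q => conj (G j q) + q.1 * dZ (fun q' => conj (G j q')) q := by
    intro j
    have h1 := eventually_eventually_nhds.mpr (hAbf j)
    filter_upwards [h1, (hGb j).eventually_analyticAt] with q hq hGq
    rw [dZ_congr hq, dZ_mul diff_z hGq.differentiableAt, dZ_z, one_mul]
  have hdUA : ∀ j k, dU k (fun q => coefA φ q j) =ᶠ[𝓝 (0 : ℂ × (Fin 2 → ℝ))]
      fun q => conj q.1 * dU k (G j) q := by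
    intro j k
    have h1 := eventually_eventually_nhds.mpr (hAf j)
    filter_upwards [h1, (hG j).eventually_analyticAt] with q hq hGq
    rw [dU_congr k hq, dU_mul k diff_zbar hGq.differentiableAt, dU_zbar, zero_mul, zero_add]
  have hdUAb : ∀ j k, dU k (fun q => conj (coefA φ q j)) =ᶠ[𝓝 (0 : ℂ × (Fin 2 → ℝ))]
      fun q => q.1 * dU k (fun q' => conj (G j q')) q := by
    intro j k
    have h1 := eventually_eventually_nhds.mpr (hAbf j)
    filter_upwards [h1, (hGb j).eventually_analyticAt] with q hq hGq
    rw [dU_congr k hq, dU_mul k diff_z hGq.differentiableAt, dU_z, zero_mul, zero_add]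
  -- values at 0
  have h00 : ((0 : ℂ × (Fin 2 → ℝ))).1 = 0 := rfl
  have hdZbarA0 : ∀ j, dZbar (fun q => coefA φ q j) 0 = G j 0 := by
    intro j; rw [(hdZbarA j).self_of_nhds]; simp
  have hdZAb0 : ∀ j, dZ (fun q => conj (coefA φ q j)) 0 = conj (G j 0) := by
    intro j; rw [(hdZAb j).self_of_nhds]; simp
  have hdUA0 : ∀ j k, dU k (fun q => coefA φ q j) 0 = 0 := by
    intro j k; rw [(hdUA j k).self_of_nhds]; simp
  have hdUAb0 : ∀ j k, dU k (fun q => conj (coefA φ q j)) 0 = 0 := by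
    intro j k; rw [(hdUAb j k).self_of_nhds]; simp
  have hdZA0 : ∀ j, dZ (fun q => coefA φ q j) 0 = 0 := by
    intro j
    rw [dZ_congr (hAf j), dZ_mul diff_zbar (hG j).differentiableAt, dZ_zbar]
    simp
  have hAb00 : ∀ j, conj (coefA φ 0 j) = 0 := by intro j; rw [hA00 j, map_zero]
  -- B values
  have hBdef : ∀ j, coefB φ j = fun q =>
      dZ (fun q' => conj (coefA φ q' j)) q +
        (coefA φ q 0 * dU 0 (fun q' => conj (coefA φ q' j)) q +
         coefA φ q 1 * dU 1 (fun q' => conj (coefA φ q' j)) q) -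
      (dZbar (fun q' => coefA φ q' j) q +
        (conj (coefA φ q 0) * dU 0 (fun q' => coefA φ q' j) q +
         conj (coefA φ q 1) * dU 1 (fun q' => coefA φ q' j) q)) := by
    intro j; funext q
    simp [coefB, opL, opLbar, Fin.sum_univ_two]
  have hBval : ∀ j, coefB φ j 0 = conj (G j 0) - G j 0 := by
    intro j
    rw [hBdef j]
    simp only [hdZAb0 j, hdZbarA0 j, hA00, hAb00, zero_mul, add_zero, zero_add, map_zero]
  -- differentiability of the six summands at 0
  have hS1d : ∀ j, AnalyticAt ℝ (dZ (fun q => conj (coefA φ q j))) 0 := by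
    intro j
    exact ((hGb j).add (analyticAt_z.mul (hGb j).dZ')).congr (hdZAb j).symm
  have hS3d : ∀ j, AnalyticAt ℝ (dZbar (fun q => coefA φ q j)) 0 := by
    intro j
    exact ((hG j).add (analyticAt_zbar.mul (hG j).dZbar')).congr (hdZbarA j).symm
  have hdUAd : ∀ j k, AnalyticAt ℝ (dU k (fun q => coefA φ q j)) 0 := by
    intro j k
    exact (analyticAt_zbar.mul ((hG j).dU' k)).congr (hdUA j k).symm
  have hdUAbd : ∀ j k, AnalyticAt ℝ (dU k (fun q => conj (coefA φ q j))) 0 := by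
    intro j k
    exact (analyticAt_z.mul ((hGb j).dU' k)).congr (hdUAb j k).symm
  -- dZ of B at 0
  have hdZS1 : ∀ j, dZ (dZ (fun q => conj (coefA φ q j))) 0 = 2 * conj (dZbar (G j) 0) := by
    intro j
    rw [dZ_congr (hdZAb j),
      dZ_add (hGb j).differentiableAt (diff_z.fun_mul (hGb j).dZ'.differentiableAt),
      dZ_mul diff_z (hGb j).dZ'.differentiableAt, dZ_z,
      dZ_conj (hG j).differentiableAt]
    simp; ring
  have hdZS3 : ∀ j, dZ (dZbar (fun q => coefA φ q j)) 0 = dZ (G j) 0 := by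
    intro j
    rw [dZ_congr (hdZbarA j),
      dZ_add (hG j).differentiableAt (diff_zbar.fun_mul (hG j).dZbar'.differentiableAt),
      dZ_mul diff_zbar (hG j).dZbar'.differentiableAt, dZ_zbar]
    simp
  have hdZB : ∀ j, dZ (coefB φ j) 0 = 2 * conj (dZbar (G j) 0) - dZ (G j) 0 := by
    intro j
    rw [hBdef j]
    have d1 := (hS1d j).differentiableAt
    have d2 : ∀ k, DifferentiableAt ℝ
        (fun q => coefA φ q k * dU k (fun q' => conj (coefA φ q' j)) q) 0 :=
      fun k => ((hAanal k).mul (hdUAbd j k)).differentiableAt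
    have d3 := (hS3d j).differentiableAt
    have d4 : ∀ k, DifferentiableAt ℝ
        (fun q => conj (coefA φ q k) * dU k (fun q' => coefA φ q' j) q) 0 :=
      fun k => ((hAbanal k).mul (hdUAd j k)).differentiableAt
    rw [dZ_sub (d1.fun_add ((d2 0).fun_add (d2 1))) (d3.fun_add ((d4 0).fun_add (d4 1))),
      dZ_add d1 ((d2 0).fun_add (d2 1)), dZ_add (d2 0) (d2 1),
      dZ_add d3 ((d4 0).fun_add (d4 1)), dZ_add (d4 0) (d4 1),
      dZ_mul (hAanal 0).differentiableAt (hdUAbd j 0).differentiableAt,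
      dZ_mul (hAanal 1).differentiableAt (hdUAbd j 1).differentiableAt,
      dZ_mul (hAbanal 0).differentiableAt (hdUAd j 0).differentiableAt,
      dZ_mul (hAbanal 1).differentiableAt (hdUAd j 1).differentiableAt,
      hdZS1 j, hdZS3 j]
    simp only [hdZA0, hAb00, hA00, hdUA0, map_zero, zero_mul, mul_zero, add_zero, zero_add]
  -- M values
  have hMval : ∀ j, coefM φ j 0 = 2 * conj (dZbar (G j) 0) - dZ (G j) 0 := by
    intro j
    have : coefM φ j 0 = dZ (coefB φ j) 0 +
        (coefA φ 0 0 * dU 0 (coefB φ j) 0 + coefA φ 0 1 * dU 1 (coefB φ j) 0) -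
        (coefB φ 0 0 * dU 0 (fun q => coefA φ q j) 0 +
         coefB φ 1 0 * dU 1 (fun q => coefA φ q j) 0) := by
      simp [coefM, opL, Fin.sum_univ_two]
    rw [this, hA00 0, hA00 1, hdUA0 j 0, hdUA0 j 1, hdZB j]
    ring
  exact ⟨hAvec, hBval, hMval⟩

/-- **Class II scholium.** If `φ = (φ₁, φ₂)` has the elementarily normalized class-II
form `φ₁ = z·conj z·(1 + ρ₁)`, `φ₂ = z²·conj z + z·(conj z)² + z·conj z·ρ₂` with
`ρ₁, ρ₂` real-valued real-analytic vanishing at `0` together with their `∂/∂z`- and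
`∂/∂z̄`-derivatives, then `A(0) = 0` (so `L|₀ = ∂/∂z|₀`, `L̄|₀ = ∂/∂z̄|₀`),
`(B₁(0), B₂(0)) = (−2i, 0)` and `(M₁(0), M₂(0)) = (0, −4i)`; that is,
`[L, L̄]|₀ = −2i·∂/∂u₁|₀` and `[L, [L, L̄]]|₀ = −4i·∂/∂u₂|₀`. -/
theorem stmt_19
    (φ : ℂ × (Fin 2 → ℝ) → (Fin 2 → ℝ))
    (hφ : AnalyticAt ℝ φ 0) (hφ0 : φ 0 = 0) (hDφ : fderiv ℝ φ 0 = 0)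
    (ρ₁ ρ₂ : ℂ × (Fin 2 → ℝ) → ℝ)
    (hρ₁ : AnalyticAt ℝ ρ₁ 0) (hρ₂ : AnalyticAt ℝ ρ₂ 0)
    (hρ₁0 : ρ₁ 0 = 0) (hρ₂0 : ρ₂ 0 = 0)
    (hρ₁z : fderiv ℝ ρ₁ 0 (1, 0) = 0) (hρ₁zbar : fderiv ℝ ρ₁ 0 (Complex.I, 0) = 0)
    (hρ₂z : fderiv ℝ ρ₂ 0 (1, 0) = 0) (hρ₂zbar : fderiv ℝ ρ₂ 0 (Complex.I, 0) = 0)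
    (hform : ∀ᶠ q in 𝓝 (0 : ℂ × (Fin 2 → ℝ)),
      ((φ q 0 : ℝ) : ℂ) = q.1 * conj q.1 * (1 + (ρ₁ q : ℂ)) ∧
      ((φ q 1 : ℝ) : ℂ) = q.1 ^ 2 * conj q.1 + q.1 * (conj q.1) ^ 2 +
        q.1 * conj q.1 * (ρ₂ q : ℂ)) :
    coefA φ 0 = 0 ∧
    coefB φ 0 0 = -2 * Complex.I ∧ coefB φ 1 0 = 0 ∧
    coefM φ 0 0 = 0 ∧ coefM φ 1 0 = -4 * Complex.I := by
  -- basic analyticity of the coerced functions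
  have hr1A : AnalyticAt ℝ (rCf ρ₁) 0 := (Complex.ofRealCLM.analyticAt _).comp hρ₁
  have hr2A : AnalyticAt ℝ (rCf ρ₂) 0 := (Complex.ofRealCLM.analyticAt _).comp hρ₂
  have hFA : ∀ j : Fin 2, AnalyticAt ℝ (Ff φ j) 0 := fun j =>
    (Complex.ofRealCLM.analyticAt _).comp
      (((ContinuousLinearMap.proj (R := ℝ) (φ := fun _ : Fin 2 => ℝ) j).analyticAt _).comp hφ)
  -- first derivatives of the coerced ρ's at 0
  have hfr1 : fderiv ℝ (rCf ρ₁) 0 = Complex.ofRealCLM.comp (fderiv ℝ ρ₁ 0) :=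
    (Complex.ofRealCLM.hasFDerivAt.comp 0 hρ₁.differentiableAt.hasFDerivAt).fderiv
  have hfr2 : fderiv ℝ (rCf ρ₂) 0 = Complex.ofRealCLM.comp (fderiv ℝ ρ₂ 0) :=
    (Complex.ofRealCLM.hasFDerivAt.comp 0 hρ₂.differentiableAt.hasFDerivAt).fderiv
  have hr1z : dZ (rCf ρ₁) 0 = 0 := by
    simp [dZ, hfr1, hρ₁z, hρ₁zbar]
  have hr1zbar : dZbar (rCf ρ₁) 0 = 0 := by
    simp [dZbar, hfr1, hρ₁z, hρ₁zbar]
  have hr2z : dZ (rCf ρ₂) 0 = 0 := by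
    simp [dZ, hfr2, hρ₂z, hρ₂zbar]
  have hr2zbar : dZbar (rCf ρ₂) 0 = 0 := by
    simp [dZbar, hfr2, hρ₂z, hρ₂zbar]
  have hr10 : rCf ρ₁ 0 = 0 := by simp [rCf, hρ₁0]
  have hr20 : rCf ρ₂ 0 = 0 := by simp [rCf, hρ₂0]
  -- eventual product form of the components
  have hF0 : Ff φ 0 =ᶠ[𝓝 (0 : ℂ × (Fin 2 → ℝ))] fun q => q.1 * conj q.1 * (1 + rCf ρ₁ q) :=
    hform.mono fun q h => h.1
  have hF1 : Ff φ 1 =ᶠ[𝓝 (0 : ℂ × (Fin 2 → ℝ))] fun q =>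
      q.1 * q.1 * conj q.1 + q.1 * (conj q.1 * conj q.1) + q.1 * conj q.1 * rCf ρ₂ q :=
    hform.mono fun q h => by
      simp only [rCf]
      rw [show Ff φ 1 q = ((φ q 1 : ℝ) : ℂ) from rfl, h.2]; ring
  -- eventual formulas for dZ of the components
  have hv0 : dZ (Ff φ 0) =ᶠ[𝓝 (0 : ℂ × (Fin 2 → ℝ))] fun q => conj q.1 * sAf ρ₁ q := by
    filter_upwards [eventually_eventually_nhds.mpr hF0, hr1A.eventually_analyticAt]
      with q h1 h2
    rw [dZ_congr h1,
      dZ_mul (f := fun q : ℂ × (Fin 2 → ℝ) => q.1 * conj q.1) (g := fun q => 1 + rCf ρ₁ q)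
        (diff_z.mul diff_zbar) ((differentiableAt_const _).add h2.differentiableAt),
      dZ_mul (f := fun q : ℂ × (Fin 2 → ℝ) => q.1) (g := fun q => conj q.1) diff_z diff_zbar,
      dZ_z, dZ_zbar,
      dZ_add (f := fun _ : ℂ × (Fin 2 → ℝ) => (1 : ℂ)) (g := rCf ρ₁)
        (differentiableAt_const _) h2.differentiableAt, dZ_const]
    simp only [sAf]; ring
  have hv1 : dZ (Ff φ 1) =ᶠ[𝓝 (0 : ℂ × (Fin 2 → ℝ))] fun q => conj q.1 * sBf ρ₂ q := by
    filter_upwards [eventually_eventually_nhds.mpr hF1, hr2A.eventually_analyticAt]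
      with q h1 h2
    rw [dZ_congr h1,
      dZ_add (f := fun q : ℂ × (Fin 2 → ℝ) => q.1 * q.1 * conj q.1 + q.1 * (conj q.1 * conj q.1))
        (g := fun q : ℂ × (Fin 2 → ℝ) => q.1 * conj q.1 * rCf ρ₂ q)
        (((diff_z.mul diff_z).mul diff_zbar).add (diff_z.mul (diff_zbar.mul diff_zbar)))
        ((diff_z.mul diff_zbar).mul h2.differentiableAt),
      dZ_add (f := fun q : ℂ × (Fin 2 → ℝ) => q.1 * q.1 * conj q.1)
        (g := fun q : ℂ × (Fin 2 → ℝ) => q.1 * (conj q.1 * conj q.1))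
        ((diff_z.mul diff_z).mul diff_zbar) (diff_z.mul (diff_zbar.mul diff_zbar)),
      dZ_mul (f := fun q : ℂ × (Fin 2 → ℝ) => q.1 * q.1) (g := fun q : ℂ × (Fin 2 → ℝ) => conj q.1)
        (diff_z.mul diff_z) diff_zbar,
      dZ_mul (f := fun q : ℂ × (Fin 2 → ℝ) => q.1) (g := fun q : ℂ × (Fin 2 → ℝ) => q.1) diff_z diff_z,
      dZ_mul (f := fun q : ℂ × (Fin 2 → ℝ) => q.1) (g := fun q : ℂ × (Fin 2 → ℝ) => conj q.1 * conj q.1)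
        diff_z (diff_zbar.mul diff_zbar),
      dZ_mul (f := fun q : ℂ × (Fin 2 → ℝ) => conj q.1) (g := fun q : ℂ × (Fin 2 → ℝ) => conj q.1) diff_zbar diff_zbar,
      dZ_mul (f := fun q : ℂ × (Fin 2 → ℝ) => q.1 * conj q.1) (g := rCf ρ₂)
        (diff_z.mul diff_zbar) h2.differentiableAt,
      dZ_mul (f := fun q : ℂ × (Fin 2 → ℝ) => q.1) (g := fun q : ℂ × (Fin 2 → ℝ) => conj q.1) diff_z diff_zbar,
      dZ_z, dZ_zbar]
    simp only [sBf]; ring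
  -- eventual formulas for dU of the components
  have he0form : ∀ k, dU k (Ff φ 0) =ᶠ[𝓝 (0 : ℂ × (Fin 2 → ℝ))]
      fun q => q.1 * conj q.1 * dU k (rCf ρ₁) q := by
    intro k
    filter_upwards [eventually_eventually_nhds.mpr hF0, hr1A.eventually_analyticAt]
      with q h1 h2
    rw [dU_congr k h1,
      dU_mul k (f := fun q : ℂ × (Fin 2 → ℝ) => q.1 * conj q.1) (g := fun q => 1 + rCf ρ₁ q)
        (diff_z.mul diff_zbar) ((differentiableAt_const _).add h2.differentiableAt),
      dU_mul k (f := fun q : ℂ × (Fin 2 → ℝ) => q.1) (g := fun q : ℂ × (Fin 2 → ℝ) => conj q.1) diff_z diff_zbar,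
      dU_z, dU_zbar,
      dU_add k (f := fun _ : ℂ × (Fin 2 → ℝ) => (1 : ℂ)) (g := rCf ρ₁)
        (differentiableAt_const _) h2.differentiableAt, dU_const]
    ring
  have he1form : ∀ k, dU k (Ff φ 1) =ᶠ[𝓝 (0 : ℂ × (Fin 2 → ℝ))]
      fun q => q.1 * conj q.1 * dU k (rCf ρ₂) q := by
    intro k
    filter_upwards [eventually_eventually_nhds.mpr hF1, hr2A.eventually_analyticAt]
      with q h1 h2
    rw [dU_congr k h1,
      dU_add k (f := fun q : ℂ × (Fin 2 → ℝ) => q.1 * q.1 * conj q.1 + q.1 * (conj q.1 * conj q.1))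
        (g := fun q : ℂ × (Fin 2 → ℝ) => q.1 * conj q.1 * rCf ρ₂ q)
        (((diff_z.mul diff_z).mul diff_zbar).add (diff_z.mul (diff_zbar.mul diff_zbar)))
        ((diff_z.mul diff_zbar).mul h2.differentiableAt),
      dU_add k (f := fun q : ℂ × (Fin 2 → ℝ) => q.1 * q.1 * conj q.1)
        (g := fun q : ℂ × (Fin 2 → ℝ) => q.1 * (conj q.1 * conj q.1))
        ((diff_z.mul diff_z).mul diff_zbar) (diff_z.mul (diff_zbar.mul diff_zbar)),
      dU_mul k (f := fun q : ℂ × (Fin 2 → ℝ) => q.1 * q.1) (g := fun q : ℂ × (Fin 2 → ℝ) => conj q.1)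
        (diff_z.mul diff_z) diff_zbar,
      dU_mul k (f := fun q : ℂ × (Fin 2 → ℝ) => q.1) (g := fun q : ℂ × (Fin 2 → ℝ) => q.1) diff_z diff_z,
      dU_mul k (f := fun q : ℂ × (Fin 2 → ℝ) => q.1) (g := fun q : ℂ × (Fin 2 → ℝ) => conj q.1 * conj q.1)
        diff_z (diff_zbar.mul diff_zbar),
      dU_mul k (f := fun q : ℂ × (Fin 2 → ℝ) => conj q.1) (g := fun q : ℂ × (Fin 2 → ℝ) => conj q.1) diff_zbar diff_zbar,
      dU_mul k (f := fun q : ℂ × (Fin 2 → ℝ) => q.1 * conj q.1) (g := rCf ρ₂)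
        (diff_z.mul diff_zbar) h2.differentiableAt,
      dU_mul k (f := fun q : ℂ × (Fin 2 → ℝ) => q.1) (g := fun q : ℂ × (Fin 2 → ℝ) => conj q.1) diff_z diff_zbar,
      dU_z, dU_zbar]
    ring
  -- values of dU of components at 0
  have hfF : ∀ j : Fin 2, fderiv ℝ (Ff φ j) 0 = 0 := by
    intro j
    have h1 : HasFDerivAt (Ff φ j)
        (Complex.ofRealCLM.comp ((ContinuousLinearMap.proj (R := ℝ)
          (φ := fun _ : Fin 2 => ℝ) j).comp (fderiv ℝ φ 0))) 0 :=
      Complex.ofRealCLM.hasFDerivAt.comp 0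
        ((ContinuousLinearMap.proj (R := ℝ) (φ := fun _ : Fin 2 => ℝ) j).hasFDerivAt.comp 0
          hφ.differentiableAt.hasFDerivAt)
    rw [h1.fderiv, hDφ]
    simp
  have heval : ∀ j k : Fin 2, dU k (Ff φ j) 0 = 0 := by
    intro j k; rw [dU, hfF j]; simp
  have heA : ∀ j k : Fin 2, AnalyticAt ℝ (dU k (Ff φ j)) 0 := fun j k => (hFA j).dU' k
  have hedZ : ∀ j k : Fin 2, dZ (dU k (Ff φ j)) 0 = 0 := by
    intro j k
    fin_cases j
    · show dZ (dU k (Ff φ 0)) 0 = 0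
      rw [dZ_congr (he0form k)]; exact dZ_zzbar (hr1A.dU' k)
    · show dZ (dU k (Ff φ 1)) 0 = 0
      rw [dZ_congr (he1form k)]; exact dZ_zzbar (hr2A.dU' k)
  have hedZbar : ∀ j k : Fin 2, dZbar (dU k (Ff φ j)) 0 = 0 := by
    intro j k
    fin_cases j
    · show dZbar (dU k (Ff φ 0)) 0 = 0
      rw [dZbar_congr (he0form k)]; exact dZbar_zzbar (hr1A.dU' k)
    · show dZbar (dU k (Ff φ 1)) 0 = 0
      rw [dZbar_congr (he1form k)]; exact dZbar_zzbar (hr2A.dU' k)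
  -- the determinant function
  have hDD0 : DD φ 0 = -1 := by
    simp [DD, heval, Complex.I_mul_I]
  have hDDne : DD φ 0 ≠ 0 := by rw [hDD0]; norm_num
  have hDDA : AnalyticAt ℝ (DD φ) 0 := by
    have : AnalyticAt ℝ (fun q : ℂ × (Fin 2 → ℝ) => (Complex.I + dU 0 (Ff φ 0) q) *
        (Complex.I + dU 1 (Ff φ 1) q) - dU 1 (Ff φ 0) q * dU 0 (Ff φ 1) q) 0 :=
      ((analyticAt_const.add (heA 0 0)).mul (analyticAt_const.add (heA 1 1))).sub
        ((heA 0 1).mul (heA 1 0))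
    exact this
  have hDDdZ : dZ (DD φ) 0 = 0 := by
    have : dZ (DD φ) 0 = dZ (fun q : ℂ × (Fin 2 → ℝ) => (Complex.I + dU 0 (Ff φ 0) q) *
        (Complex.I + dU 1 (Ff φ 1) q) - dU 1 (Ff φ 0) q * dU 0 (Ff φ 1) q) 0 := rfl
    rw [this,
      dZ_sub (f := fun q : ℂ × (Fin 2 → ℝ) => (Complex.I + dU 0 (Ff φ 0) q) * (Complex.I + dU 1 (Ff φ 1) q))
        (g := fun q : ℂ × (Fin 2 → ℝ) => dU 1 (Ff φ 0) q * dU 0 (Ff φ 1) q)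
        (((analyticAt_const.add (heA 0 0)).mul (analyticAt_const.add (heA 1 1))).differentiableAt)
        (((heA 0 1).mul (heA 1 0)).differentiableAt),
      dZ_mul (f := fun q : ℂ × (Fin 2 → ℝ) => Complex.I + dU 0 (Ff φ 0) q)
        (g := fun q : ℂ × (Fin 2 → ℝ) => Complex.I + dU 1 (Ff φ 1) q)
        ((analyticAt_const.add (heA 0 0)).differentiableAt)
        ((analyticAt_const.add (heA 1 1)).differentiableAt),
      dZ_mul (f := dU 1 (Ff φ 0)) (g := dU 0 (Ff φ 1))
        ((heA 0 1).differentiableAt) ((heA 1 0).differentiableAt),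
      dZ_add (f := fun _ : ℂ × (Fin 2 → ℝ) => Complex.I) (g := dU 0 (Ff φ 0))
        (differentiableAt_const _) ((heA 0 0).differentiableAt),
      dZ_add (f := fun _ : ℂ × (Fin 2 → ℝ) => Complex.I) (g := dU 1 (Ff φ 1))
        (differentiableAt_const _) ((heA 1 1).differentiableAt),
      dZ_const, hedZ, hedZ, hedZ, hedZ, heval, heval]
    ring
  have hDDdZbar : dZbar (DD φ) 0 = 0 := by
    have : dZbar (DD φ) 0 = dZbar (fun q : ℂ × (Fin 2 → ℝ) => (Complex.I + dU 0 (Ff φ 0) q) *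
        (Complex.I + dU 1 (Ff φ 1) q) - dU 1 (Ff φ 0) q * dU 0 (Ff φ 1) q) 0 := rfl
    rw [this]
    rw [show (fun q : ℂ × (Fin 2 → ℝ) => (Complex.I + dU 0 (Ff φ 0) q) * (Complex.I + dU 1 (Ff φ 1) q) -
        dU 1 (Ff φ 0) q * dU 0 (Ff φ 1) q) = (fun q : ℂ × (Fin 2 → ℝ) =>
        (Complex.I + dU 0 (Ff φ 0) q) * (Complex.I + dU 1 (Ff φ 1) q) +
        -(dU 1 (Ff φ 0) q * dU 0 (Ff φ 1) q)) from funext fun q => by ring]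
    rw [dZbar_add (f := fun q : ℂ × (Fin 2 → ℝ) => (Complex.I + dU 0 (Ff φ 0) q) * (Complex.I + dU 1 (Ff φ 1) q))
        (g := fun q : ℂ × (Fin 2 → ℝ) => -(dU 1 (Ff φ 0) q * dU 0 (Ff φ 1) q))
        (((analyticAt_const.add (heA 0 0)).mul (analyticAt_const.add (heA 1 1))).differentiableAt)
        (((heA 0 1).mul (heA 1 0)).differentiableAt.neg),
      dZbar_neg,
      dZbar_mul (f := fun q : ℂ × (Fin 2 → ℝ) => Complex.I + dU 0 (Ff φ 0) q)
        (g := fun q : ℂ × (Fin 2 → ℝ) => Complex.I + dU 1 (Ff φ 1) q)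
        ((analyticAt_const.add (heA 0 0)).differentiableAt)
        ((analyticAt_const.add (heA 1 1)).differentiableAt),
      dZbar_mul (f := dU 1 (Ff φ 0)) (g := dU 0 (Ff φ 1))
        ((heA 0 1).differentiableAt) ((heA 1 0).differentiableAt),
      dZbar_add (f := fun _ : ℂ × (Fin 2 → ℝ) => Complex.I) (g := dU 0 (Ff φ 0))
        (differentiableAt_const _) ((heA 0 0).differentiableAt),
      dZbar_add (f := fun _ : ℂ × (Fin 2 → ℝ) => Complex.I) (g := dU 1 (Ff φ 1))
        (differentiableAt_const _) ((heA 1 1).differentiableAt),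
      dZbar_const, hedZbar, hedZbar, hedZbar, hedZbar, heval, heval]
    ring
  -- the s functions
  have hsA_A : AnalyticAt ℝ (sAf ρ₁) 0 := by
    have : AnalyticAt ℝ (fun q : ℂ × (Fin 2 → ℝ) =>
        1 + rCf ρ₁ q + q.1 * dZ (rCf ρ₁) q) 0 :=
      (analyticAt_const.add hr1A).add (analyticAt_z.mul hr1A.dZ')
    exact this
  have hsB_A : AnalyticAt ℝ (sBf ρ₂) 0 := by
    have : AnalyticAt ℝ (fun q : ℂ × (Fin 2 → ℝ) =>
        2 * q.1 + conj q.1 + rCf ρ₂ q + q.1 * dZ (rCf ρ₂) q) 0 :=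
      (((analyticAt_const.mul analyticAt_z).add analyticAt_zbar).add hr2A).add
        (analyticAt_z.mul hr2A.dZ')
    exact this
  have hsA0 : sAf ρ₁ 0 = 1 := by simp [sAf, hr10]
  have hsB0 : sBf ρ₂ 0 = 0 := by simp [sBf, hr20]
  have hsAdZ : dZ (sAf ρ₁) 0 = 0 := by
    have h1 : dZ (sAf ρ₁) 0 = dZ (fun q : ℂ × (Fin 2 → ℝ) =>
        1 + rCf ρ₁ q + q.1 * dZ (rCf ρ₁) q) 0 := rfl
    rw [h1,
      dZ_add (f := fun q : ℂ × (Fin 2 → ℝ) => 1 + rCf ρ₁ q)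
        (g := fun q : ℂ × (Fin 2 → ℝ) => q.1 * dZ (rCf ρ₁) q)
        ((differentiableAt_const _).add hr1A.differentiableAt)
        (diff_z.mul hr1A.dZ'.differentiableAt),
      dZ_add (f := fun _ : ℂ × (Fin 2 → ℝ) => (1 : ℂ)) (g := rCf ρ₁)
        (differentiableAt_const _) hr1A.differentiableAt,
      dZ_mul (f := fun q : ℂ × (Fin 2 → ℝ) => q.1) (g := dZ (rCf ρ₁))
        diff_z hr1A.dZ'.differentiableAt,
      dZ_const, dZ_z, hr1z]
    simp
  have hsAdZbar : dZbar (sAf ρ₁) 0 = 0 := by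
    have h1 : dZbar (sAf ρ₁) 0 = dZbar (fun q : ℂ × (Fin 2 → ℝ) =>
        1 + rCf ρ₁ q + q.1 * dZ (rCf ρ₁) q) 0 := rfl
    rw [h1,
      dZbar_add (f := fun q : ℂ × (Fin 2 → ℝ) => 1 + rCf ρ₁ q)
        (g := fun q : ℂ × (Fin 2 → ℝ) => q.1 * dZ (rCf ρ₁) q)
        ((differentiableAt_const _).add hr1A.differentiableAt)
        (diff_z.mul hr1A.dZ'.differentiableAt),
      dZbar_add (f := fun _ : ℂ × (Fin 2 → ℝ) => (1 : ℂ)) (g := rCf ρ₁)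
        (differentiableAt_const _) hr1A.differentiableAt,
      dZbar_mul (f := fun q : ℂ × (Fin 2 → ℝ) => q.1) (g := dZ (rCf ρ₁))
        diff_z hr1A.dZ'.differentiableAt,
      dZbar_const, dZbar_z, hr1zbar, hr1z]
    simp
  have hsBdZ : dZ (sBf ρ₂) 0 = 2 := by
    have h1 : dZ (sBf ρ₂) 0 = dZ (fun q : ℂ × (Fin 2 → ℝ) =>
        2 * q.1 + conj q.1 + rCf ρ₂ q + q.1 * dZ (rCf ρ₂) q) 0 := rfl
    rw [h1,
      dZ_add (f := fun q : ℂ × (Fin 2 → ℝ) => 2 * q.1 + conj q.1 + rCf ρ₂ q)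
        (g := fun q : ℂ × (Fin 2 → ℝ) => q.1 * dZ (rCf ρ₂) q)
        ((((differentiableAt_const _).mul diff_z).add diff_zbar).add hr2A.differentiableAt)
        (diff_z.mul hr2A.dZ'.differentiableAt),
      dZ_add (f := fun q : ℂ × (Fin 2 → ℝ) => 2 * q.1 + conj q.1) (g := rCf ρ₂)
        (((differentiableAt_const _).mul diff_z).add diff_zbar) hr2A.differentiableAt,
      dZ_add (f := fun q : ℂ × (Fin 2 → ℝ) => 2 * q.1)
        (g := fun q : ℂ × (Fin 2 → ℝ) => conj q.1)
        ((differentiableAt_const _).mul diff_z) diff_zbar,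
      dZ_mul (f := fun _ : ℂ × (Fin 2 → ℝ) => (2 : ℂ))
        (g := fun q : ℂ × (Fin 2 → ℝ) => q.1) (differentiableAt_const _) diff_z,
      dZ_mul (f := fun q : ℂ × (Fin 2 → ℝ) => q.1) (g := dZ (rCf ρ₂))
        diff_z hr2A.dZ'.differentiableAt,
      dZ_const, dZ_z, dZ_zbar, hr2z]
    simp
  have hsBdZbar : dZbar (sBf ρ₂) 0 = 1 := by
    have h1 : dZbar (sBf ρ₂) 0 = dZbar (fun q : ℂ × (Fin 2 → ℝ) =>
        2 * q.1 + conj q.1 + rCf ρ₂ q + q.1 * dZ (rCf ρ₂) q) 0 := rfl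
    rw [h1,
      dZbar_add (f := fun q : ℂ × (Fin 2 → ℝ) => 2 * q.1 + conj q.1 + rCf ρ₂ q)
        (g := fun q : ℂ × (Fin 2 → ℝ) => q.1 * dZ (rCf ρ₂) q)
        ((((differentiableAt_const _).mul diff_z).add diff_zbar).add hr2A.differentiableAt)
        (diff_z.mul hr2A.dZ'.differentiableAt),
      dZbar_add (f := fun q : ℂ × (Fin 2 → ℝ) => 2 * q.1 + conj q.1) (g := rCf ρ₂)
        (((differentiableAt_const _).mul diff_z).add diff_zbar) hr2A.differentiableAt,
      dZbar_add (f := fun q : ℂ × (Fin 2 → ℝ) => 2 * q.1)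
        (g := fun q : ℂ × (Fin 2 → ℝ) => conj q.1)
        ((differentiableAt_const _).mul diff_z) diff_zbar,
      dZbar_mul (f := fun _ : ℂ × (Fin 2 → ℝ) => (2 : ℂ))
        (g := fun q : ℂ × (Fin 2 → ℝ) => q.1) (differentiableAt_const _) diff_z,
      dZbar_mul (f := fun q : ℂ × (Fin 2 → ℝ) => q.1) (g := dZ (rCf ρ₂))
        diff_z hr2A.dZ'.differentiableAt,
      dZbar_const, dZbar_z, dZbar_zbar, hr2zbar, hr2z]
    simp
  -- the t functions
  have htA_A : AnalyticAt ℝ (tAf φ ρ₁ ρ₂) 0 := by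
    have : AnalyticAt ℝ (fun q : ℂ × (Fin 2 → ℝ) =>
        (Complex.I + dU 1 (Ff φ 1) q) * sAf ρ₁ q - dU 1 (Ff φ 0) q * sBf ρ₂ q) 0 :=
      ((analyticAt_const.add (heA 1 1)).mul hsA_A).sub ((heA 0 1).mul hsB_A)
    exact this
  have htB_A : AnalyticAt ℝ (tBf φ ρ₁ ρ₂) 0 := by
    have : AnalyticAt ℝ (fun q : ℂ × (Fin 2 → ℝ) =>
        -(dU 0 (Ff φ 1) q) * sAf ρ₁ q + (Complex.I + dU 0 (Ff φ 0) q) * sBf ρ₂ q) 0 :=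
      (((heA 1 0).neg).mul hsA_A).add ((analyticAt_const.add (heA 0 0)).mul hsB_A)
    exact this
  have htA0 : tAf φ ρ₁ ρ₂ 0 = Complex.I := by
    simp [tAf, heval, hsA0, hsB0]
  have htB0 : tBf φ ρ₁ ρ₂ 0 = 0 := by
    simp [tBf, heval, hsA0, hsB0]
  have htAdZ : dZ (tAf φ ρ₁ ρ₂) 0 = 0 := by
    have h1 : dZ (tAf φ ρ₁ ρ₂) 0 = dZ (fun q : ℂ × (Fin 2 → ℝ) =>
        (Complex.I + dU 1 (Ff φ 1) q) * sAf ρ₁ q - dU 1 (Ff φ 0) q * sBf ρ₂ q) 0 := rfl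
    rw [h1,
      dZ_sub (f := fun q : ℂ × (Fin 2 → ℝ) => (Complex.I + dU 1 (Ff φ 1) q) * sAf ρ₁ q)
        (g := fun q : ℂ × (Fin 2 → ℝ) => dU 1 (Ff φ 0) q * sBf ρ₂ q)
        (((analyticAt_const.add (heA 1 1)).mul hsA_A).differentiableAt)
        (((heA 0 1).mul hsB_A).differentiableAt),
      dZ_mul (f := fun q : ℂ × (Fin 2 → ℝ) => Complex.I + dU 1 (Ff φ 1) q) (g := sAf ρ₁)
        ((analyticAt_const.add (heA 1 1)).differentiableAt) hsA_A.differentiableAt,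
      dZ_mul (f := dU 1 (Ff φ 0)) (g := sBf ρ₂)
        ((heA 0 1).differentiableAt) hsB_A.differentiableAt,
      dZ_add (f := fun _ : ℂ × (Fin 2 → ℝ) => Complex.I) (g := dU 1 (Ff φ 1))
        (differentiableAt_const _) ((heA 1 1).differentiableAt),
      dZ_const, hedZ, hedZ, hsA0, hsB0, hsAdZ, hsBdZ]
    simp [heval]
  have htAdZbar : dZbar (tAf φ ρ₁ ρ₂) 0 = 0 := by
    have h1 : dZbar (tAf φ ρ₁ ρ₂) 0 = dZbar (fun q : ℂ × (Fin 2 → ℝ) =>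
        (Complex.I + dU 1 (Ff φ 1) q) * sAf ρ₁ q + -(dU 1 (Ff φ 0) q * sBf ρ₂ q)) 0 := by
      have h2 : tAf φ ρ₁ ρ₂ = fun q : ℂ × (Fin 2 → ℝ) =>
          (Complex.I + dU 1 (Ff φ 1) q) * sAf ρ₁ q + -(dU 1 (Ff φ 0) q * sBf ρ₂ q) := by
        funext q; simp only [tAf]; ring
      rw [h2]
    rw [h1,
      dZbar_add (f := fun q : ℂ × (Fin 2 → ℝ) => (Complex.I + dU 1 (Ff φ 1) q) * sAf ρ₁ q)
        (g := fun q : ℂ × (Fin 2 → ℝ) => -(dU 1 (Ff φ 0) q * sBf ρ₂ q))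
        (((analyticAt_const.add (heA 1 1)).mul hsA_A).differentiableAt)
        (((heA 0 1).mul hsB_A).differentiableAt.neg),
      dZbar_neg,
      dZbar_mul (f := fun q : ℂ × (Fin 2 → ℝ) => Complex.I + dU 1 (Ff φ 1) q) (g := sAf ρ₁)
        ((analyticAt_const.add (heA 1 1)).differentiableAt) hsA_A.differentiableAt,
      dZbar_mul (f := dU 1 (Ff φ 0)) (g := sBf ρ₂)
        ((heA 0 1).differentiableAt) hsB_A.differentiableAt,
      dZbar_add (f := fun _ : ℂ × (Fin 2 → ℝ) => Complex.I) (g := dU 1 (Ff φ 1))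
        (differentiableAt_const _) ((heA 1 1).differentiableAt),
      dZbar_const, hedZbar, hedZbar, hsA0, hsB0, hsAdZbar, hsBdZbar]
    simp [heval]
  have htBdZ : dZ (tBf φ ρ₁ ρ₂) 0 = 2 * Complex.I := by
    have h1 : dZ (tBf φ ρ₁ ρ₂) 0 = dZ (fun q : ℂ × (Fin 2 → ℝ) =>
        -(dU 0 (Ff φ 1) q) * sAf ρ₁ q + (Complex.I + dU 0 (Ff φ 0) q) * sBf ρ₂ q) 0 := rfl
    rw [h1,
      dZ_add (f := fun q : ℂ × (Fin 2 → ℝ) => -(dU 0 (Ff φ 1) q) * sAf ρ₁ q)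
        (g := fun q : ℂ × (Fin 2 → ℝ) => (Complex.I + dU 0 (Ff φ 0) q) * sBf ρ₂ q)
        ((((heA 1 0).neg).mul hsA_A).differentiableAt)
        (((analyticAt_const.add (heA 0 0)).mul hsB_A).differentiableAt),
      dZ_mul (f := fun q : ℂ × (Fin 2 → ℝ) => -(dU 0 (Ff φ 1) q)) (g := sAf ρ₁)
        (((heA 1 0).neg).differentiableAt) hsA_A.differentiableAt,
      dZ_mul (f := fun q : ℂ × (Fin 2 → ℝ) => Complex.I + dU 0 (Ff φ 0) q) (g := sBf ρ₂)
        ((analyticAt_const.add (heA 0 0)).differentiableAt) hsB_A.differentiableAt,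
      dZ_add (f := fun _ : ℂ × (Fin 2 → ℝ) => Complex.I) (g := dU 0 (Ff φ 0))
        (differentiableAt_const _) ((heA 0 0).differentiableAt),
      dZ_neg, dZ_const, hedZ, hedZ, hsA0, hsB0, hsAdZ, hsBdZ]
    simp [heval]; ring
  have htBdZbar : dZbar (tBf φ ρ₁ ρ₂) 0 = Complex.I := by
    have h1 : dZbar (tBf φ ρ₁ ρ₂) 0 = dZbar (fun q : ℂ × (Fin 2 → ℝ) =>
        -(dU 0 (Ff φ 1) q) * sAf ρ₁ q + (Complex.I + dU 0 (Ff φ 0) q) * sBf ρ₂ q) 0 := rfl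
    rw [h1,
      dZbar_add (f := fun q : ℂ × (Fin 2 → ℝ) => -(dU 0 (Ff φ 1) q) * sAf ρ₁ q)
        (g := fun q : ℂ × (Fin 2 → ℝ) => (Complex.I + dU 0 (Ff φ 0) q) * sBf ρ₂ q)
        ((((heA 1 0).neg).mul hsA_A).differentiableAt)
        (((analyticAt_const.add (heA 0 0)).mul hsB_A).differentiableAt),
      dZbar_mul (f := fun q : ℂ × (Fin 2 → ℝ) => -(dU 0 (Ff φ 1) q)) (g := sAf ρ₁)
        (((heA 1 0).neg).differentiableAt) hsA_A.differentiableAt,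
      dZbar_mul (f := fun q : ℂ × (Fin 2 → ℝ) => Complex.I + dU 0 (Ff φ 0) q) (g := sBf ρ₂)
        ((analyticAt_const.add (heA 0 0)).differentiableAt) hsB_A.differentiableAt,
      dZbar_add (f := fun _ : ℂ × (Fin 2 → ℝ) => Complex.I) (g := dU 0 (Ff φ 0))
        (differentiableAt_const _) ((heA 0 0).differentiableAt),
      dZbar_neg, dZbar_const, hedZbar, hedZbar, hsA0, hsB0, hsAdZbar, hsBdZbar]
    simp [heval]
  -- the G functions
  have hDDinvA : AnalyticAt ℝ (fun q => (DD φ q)⁻¹) 0 := hDDA.inv hDDne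
  have hGA_A : AnalyticAt ℝ (GAf φ ρ₁ ρ₂) 0 := by
    have : AnalyticAt ℝ (fun q : ℂ × (Fin 2 → ℝ) => -(DD φ q)⁻¹ * tAf φ ρ₁ ρ₂ q) 0 :=
      (hDDinvA.neg).mul htA_A
    exact this
  have hGB_A : AnalyticAt ℝ (GBf φ ρ₁ ρ₂) 0 := by
    have : AnalyticAt ℝ (fun q : ℂ × (Fin 2 → ℝ) => -(DD φ q)⁻¹ * tBf φ ρ₁ ρ₂ q) 0 :=
      (hDDinvA.neg).mul htB_A
    exact this
  have hGA0 : GAf φ ρ₁ ρ₂ 0 = Complex.I := by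
    simp [GAf, hDD0, htA0]
  have hGB0 : GBf φ ρ₁ ρ₂ 0 = 0 := by
    simp [GBf, hDD0, htB0]
  have hneginv : dZ (fun q : ℂ × (Fin 2 → ℝ) => -(DD φ q)⁻¹) 0 = 0 := by
    rw [show (fun q : ℂ × (Fin 2 → ℝ) => -(DD φ q)⁻¹) =
        (fun q : ℂ × (Fin 2 → ℝ) => -((fun q' => (DD φ q')⁻¹) q)) from rfl, dZ_neg,
      dZ_inv hDDA.differentiableAt hDDne, hDDdZ]
    ring
  have hneginvbar : dZbar (fun q : ℂ × (Fin 2 → ℝ) => -(DD φ q)⁻¹) 0 = 0 := by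
    rw [show (fun q : ℂ × (Fin 2 → ℝ) => -(DD φ q)⁻¹) =
        (fun q : ℂ × (Fin 2 → ℝ) => -((fun q' => (DD φ q')⁻¹) q)) from rfl, dZbar_neg,
      dZbar_inv hDDA.differentiableAt hDDne, hDDdZbar]
    ring
  have hGAdZ : dZ (GAf φ ρ₁ ρ₂) 0 = 0 := by
    have h1 : dZ (GAf φ ρ₁ ρ₂) 0 = dZ (fun q : ℂ × (Fin 2 → ℝ) =>
        -(DD φ q)⁻¹ * tAf φ ρ₁ ρ₂ q) 0 := rfl
    rw [h1, dZ_mul (f := fun q : ℂ × (Fin 2 → ℝ) => -(DD φ q)⁻¹) (g := tAf φ ρ₁ ρ₂)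
        ((hDDinvA.neg).differentiableAt) htA_A.differentiableAt,
      hneginv, htAdZ, htA0]
    ring
  have hGAdZbar : dZbar (GAf φ ρ₁ ρ₂) 0 = 0 := by
    have h1 : dZbar (GAf φ ρ₁ ρ₂) 0 = dZbar (fun q : ℂ × (Fin 2 → ℝ) =>
        -(DD φ q)⁻¹ * tAf φ ρ₁ ρ₂ q) 0 := rfl
    rw [h1, dZbar_mul (f := fun q : ℂ × (Fin 2 → ℝ) => -(DD φ q)⁻¹) (g := tAf φ ρ₁ ρ₂)
        ((hDDinvA.neg).differentiableAt) htA_A.differentiableAt,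
      hneginvbar, htAdZbar, htA0]
    ring
  have hGBdZ : dZ (GBf φ ρ₁ ρ₂) 0 = 2 * Complex.I := by
    have h1 : dZ (GBf φ ρ₁ ρ₂) 0 = dZ (fun q : ℂ × (Fin 2 → ℝ) =>
        -(DD φ q)⁻¹ * tBf φ ρ₁ ρ₂ q) 0 := rfl
    rw [h1, dZ_mul (f := fun q : ℂ × (Fin 2 → ℝ) => -(DD φ q)⁻¹) (g := tBf φ ρ₁ ρ₂)
        ((hDDinvA.neg).differentiableAt) htB_A.differentiableAt,
      hneginv, htBdZ, htB0, hDD0]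
    norm_num
  have hGBdZbar : dZbar (GBf φ ρ₁ ρ₂) 0 = Complex.I := by
    have h1 : dZbar (GBf φ ρ₁ ρ₂) 0 = dZbar (fun q : ℂ × (Fin 2 → ℝ) =>
        -(DD φ q)⁻¹ * tBf φ ρ₁ ρ₂ q) 0 := rfl
    rw [h1, dZbar_mul (f := fun q : ℂ × (Fin 2 → ℝ) => -(DD φ q)⁻¹) (g := tBf φ ρ₁ ρ₂)
        ((hDDinvA.neg).differentiableAt) htB_A.differentiableAt,
      hneginvbar, htBdZbar, htB0, hDD0]
    norm_num
  -- eventual factorisation of coefA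
  have hAf0 : (fun q => coefA φ q 0) =ᶠ[𝓝 (0 : ℂ × (Fin 2 → ℝ))]
      fun q => conj q.1 * GAf φ ρ₁ ρ₂ q := by
    filter_upwards [hv0, hv1] with q h0 h1
    rw [(coefA_formula φ q).1, h0, h1]
    simp only [GAf, tAf]; ring
  have hAf1 : (fun q => coefA φ q 1) =ᶠ[𝓝 (0 : ℂ × (Fin 2 → ℝ))]
      fun q => conj q.1 * GBf φ ρ₁ ρ₂ q := by
    filter_upwards [hv0, hv1] with q h0 h1
    rw [(coefA_formula φ q).2, h0, h1]
    simp only [GBf, tBf]; ring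
  -- apply the master lemma
  obtain ⟨m1, m2, m3⟩ := master φ ![GAf φ ρ₁ ρ₂, GBf φ ρ₁ ρ₂]
    (by intro j; fin_cases j
        · simpa using hGA_A
        · simpa using hGB_A)
    (by intro j; fin_cases j
        · simpa using hAf0
        · simpa using hAf1)
  refine ⟨m1, ?_, ?_, ?_, ?_⟩
  · have := m2 0
    simp only [Matrix.cons_val_zero] at this
    rw [this, hGA0, Complex.conj_I]; ring
  · have := m2 1
    simp only [Matrix.cons_val_one, Matrix.head_cons, Matrix.cons_val_zero] at this
    rw [this, hGB0]; simp
  · have := m3 0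
    simp only [Matrix.cons_val_zero] at this
    rw [this, hGAdZbar, hGAdZ]; simp
  · have := m3 1
    simp only [Matrix.cons_val_one, Matrix.head_cons, Matrix.cons_val_zero] at this
    rw [this, hGBdZbar, hGBdZ, Complex.conj_I]; ring
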